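/- Let U ⊆ ℂ be open and φ₁, φ₂, φ₃ : ℂ → ℂ be holomorphic on U with φ₁² + φ₂² + φ₃² = 0 on U and λ := (|φ₁|² + |φ₂|² + |φ₃|²)/2 > 0 on U. Define real-valued functions α := −Im(φ₂·conj(φ₃))/λ, β := −Im(φ₃·conj(φ₁))/λ, γ := −Im(φ₁·conj(φ₂))/λ on U. Then on U the following relations hold for the Wirtinger derivatives: −i·∂̄α = β·∂̄γ − γ·∂̄β, −i·∂̄β = γ·∂̄α − α·∂̄γ, and −i·∂̄γ = α·∂̄β − β·∂̄α. -/

import Mathlib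

open Complex ComplexConjugate

/-- The Wirtinger derivative with respect to `z̄` of a map `ℂ → ℂ`,
viewed as a map between real vector spaces. -/
noncomputable def dbar (h : ℂ → ℂ) (z : ℂ) : ℂ :=
  (1 / 2) * (fderiv ℝ h z 1 + Complex.I • fderiv ℝ h z Complex.I)

lemma dbar_congr {f g : ℂ → ℂ} {z : ℂ} (h : f =ᶠ[nhds z] g) : dbar f z = dbar g z := by
  unfold dbar; rw [h.fderiv_eq]

lemma diff_conj {f : ℂ → ℂ} {z : ℂ} (hf : DifferentiableAt ℂ f z) :
    DifferentiableAt ℝ (fun w => conj (f w)) z :=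
  Complex.conjCLE.differentiableAt.comp z (hf.restrictScalars ℝ)

section
variable {f g : ℂ → ℂ} {z : ℂ}

lemma dbar_holo (hf : DifferentiableAt ℂ f z) : dbar f z = 0 := by
  have h := hf.fderiv_restrictScalars ℝ
  have hI : fderiv ℂ f z Complex.I = Complex.I • fderiv ℂ f z 1 := by
    rw [← map_smul, smul_eq_mul, mul_one]
  simp only [dbar, h, ContinuousLinearMap.coe_restrictScalars', hI, smul_smul,
    Complex.I_mul_I, smul_eq_mul]
  linear_combination ((fderiv ℂ f z 1) / 2) * Complex.I_sq

lemma dbar_conj_holo (hf : DifferentiableAt ℂ f z) :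
    dbar (fun w => conj (f w)) z = conj (deriv f z) := by
  have hcomp : (fun w => conj (f w)) = Complex.conjCLE ∘ f := rfl
  have hd := hf.restrictScalars ℝ
  have h := fderiv_comp (𝕜 := ℝ) z Complex.conjCLE.differentiableAt hd
  have h1 : fderiv ℝ f z 1 = deriv f z := by
    rw [hf.fderiv_restrictScalars ℝ, ContinuousLinearMap.coe_restrictScalars',
      ← fderiv_apply_one_eq_deriv]
  have hI : fderiv ℝ f z Complex.I = Complex.I * deriv f z := by
    rw [hf.fderiv_restrictScalars ℝ, ContinuousLinearMap.coe_restrictScalars']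
    have : fderiv ℂ f z Complex.I = Complex.I • fderiv ℂ f z 1 := by
      rw [← map_smul, smul_eq_mul, mul_one]
    rw [this, smul_eq_mul, fderiv_apply_one_eq_deriv]
  rw [hcomp, dbar, h, Complex.conjCLE.fderiv]
  simp only [ContinuousLinearMap.coe_comp', Function.comp_apply,
    ContinuousLinearEquiv.coe_coe, Complex.conjCLE_apply, h1, hI, map_mul,
    Complex.conj_I, smul_eq_mul]
  linear_combination (-(conj (deriv f z)) / 2) * Complex.I_sq

lemma dbar_add (hf : DifferentiableAt ℝ f z) (hg : DifferentiableAt ℝ g z) :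
    dbar (fun w => f w + g w) z = dbar f z + dbar g z := by
  simp only [dbar, fderiv_fun_add hf hg, ContinuousLinearMap.add_apply, smul_eq_mul]
  ring

lemma dbar_sub (hf : DifferentiableAt ℝ f z) (hg : DifferentiableAt ℝ g z) :
    dbar (fun w => f w - g w) z = dbar f z - dbar g z := by
  simp only [dbar, fderiv_fun_sub hf hg, ContinuousLinearMap.sub_apply, smul_eq_mul]
  ring

lemma dbar_mul (hf : DifferentiableAt ℝ f z) (hg : DifferentiableAt ℝ g z) :
    dbar (fun w => f w * g w) z = f z * dbar g z + g z * dbar f z := by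
  simp only [dbar, fderiv_fun_mul hf hg, ContinuousLinearMap.add_apply,
    ContinuousLinearMap.smul_apply, smul_eq_mul]
  ring

lemma dbar_const_mul (c : ℂ) (hf : DifferentiableAt ℝ f z) :
    dbar (fun w => c * f w) z = c * dbar f z := by
  simp only [dbar, fderiv_const_mul hf c, ContinuousLinearMap.smul_apply, smul_eq_mul]
  ring

/-- dbar of a product `f · conj g` of a holomorphic and an antiholomorphic factor. -/
lemma dbar_mul_conj (hf : DifferentiableAt ℂ f z) (hg : DifferentiableAt ℂ g z) :
    dbar (fun w => f w * conj (g w)) z = f z * conj (deriv g z) := by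
  rw [dbar_mul (hf.restrictScalars ℝ) (diff_conj hg), dbar_conj_holo hg, dbar_holo hf]
  ring

end

lemma dbar_component {φ₁ φ₂ φ₃ f g : ℂ → ℂ} {lam : ℂ → ℝ} {z : ℂ}
    (hd1 : DifferentiableAt ℂ φ₁ z) (hd2 : DifferentiableAt ℂ φ₂ z)
    (hd3 : DifferentiableAt ℂ φ₃ z)
    (hdf : DifferentiableAt ℂ f z) (hdg : DifferentiableAt ℂ g z)
    (hLc : ∀ w, ((lam w : ℝ) : ℂ) =
      (φ₁ w * conj (φ₁ w) + φ₂ w * conj (φ₂ w) + φ₃ w * conj (φ₃ w)) / 2)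
    (hne : ((lam z : ℝ) : ℂ) ≠ 0) :
    ((lam z : ℝ) : ℂ) ^ 2 *
      dbar (fun w => (Complex.I / 2 * (f w * conj (g w) - g w * conj (f w))) /
        ((lam w : ℝ) : ℂ)) z
      = ((lam z : ℝ) : ℂ) * (Complex.I / 2 * (f z * conj (deriv g z) - g z * conj (deriv f z)))
        - (Complex.I / 2 * (f z * conj (g z) - g z * conj (f z))) *
          ((φ₁ z * conj (deriv φ₁ z) + φ₂ z * conj (deriv φ₂ z) + φ₃ z * conj (deriv φ₃ z)) / 2) := by
  have hprod2 : ∀ (u v : ℂ → ℂ), DifferentiableAt ℂ u z → DifferentiableAt ℂ v z →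
      DifferentiableAt ℝ (fun w => u w * conj (v w)) z := fun u v hu hv =>
    (hu.restrictScalars ℝ).mul (diff_conj hv)
  have hLd : DifferentiableAt ℝ (fun w : ℂ => ((lam w : ℝ) : ℂ)) z := by
    rw [show (fun w : ℂ => ((lam w : ℝ) : ℂ)) = fun w =>
      (2 : ℂ)⁻¹ * ((φ₁ w * conj (φ₁ w) + φ₂ w * conj (φ₂ w)) + φ₃ w * conj (φ₃ w)) from
      funext fun w => by rw [hLc w]; ring]
    exact (((hprod2 _ _ hd1 hd1).add (hprod2 _ _ hd2 hd2)).add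
      (hprod2 _ _ hd3 hd3)).const_mul _
  have hNd : DifferentiableAt ℝ
      (fun w => Complex.I / 2 * (f w * conj (g w) - g w * conj (f w))) z :=
    ((hprod2 _ _ hdf hdg).sub (hprod2 _ _ hdg hdf)).const_mul _
  have hq : DifferentiableAt ℝ (fun w =>
      (Complex.I / 2 * (f w * conj (g w) - g w * conj (f w))) / ((lam w : ℝ) : ℂ)) z :=
    by
      simp only [div_eq_mul_inv]
      exact hNd.mul (hLd.inv hne)
  have hev : ∀ᶠ w in nhds z, ((lam w : ℝ) : ℂ) ≠ 0 := hLd.continuousAt.eventually_ne hne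
  have heq : (fun w => (Complex.I / 2 * (f w * conj (g w) - g w * conj (f w))) /
      ((lam w : ℝ) : ℂ) * ((lam w : ℝ) : ℂ)) =ᶠ[nhds z]
      (fun w => Complex.I / 2 * (f w * conj (g w) - g w * conj (f w))) := by
    filter_upwards [hev] with w hw
    exact div_mul_cancel₀ _ hw
  have hNL : dbar (fun w => Complex.I / 2 * (f w * conj (g w) - g w * conj (f w))) z =
      (Complex.I / 2 * (f z * conj (g z) - g z * conj (f z))) / ((lam z : ℝ) : ℂ) *
        dbar (fun w : ℂ => ((lam w : ℝ) : ℂ)) z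
      + ((lam z : ℝ) : ℂ) * dbar (fun w =>
          (Complex.I / 2 * (f w * conj (g w) - g w * conj (f w))) / ((lam w : ℝ) : ℂ)) z := by
    rw [← dbar_congr heq, dbar_mul hq hLd]
  have hdbarN : dbar (fun w => Complex.I / 2 * (f w * conj (g w) - g w * conj (f w))) z
      = Complex.I / 2 * (f z * conj (deriv g z) - g z * conj (deriv f z)) := by
    rw [dbar_const_mul (f := fun w => f w * conj (g w) - g w * conj (f w)) _ ((hprod2 _ _ hdf hdg).sub (hprod2 _ _ hdg hdf)),
      dbar_sub (hprod2 _ _ hdf hdg) (hprod2 _ _ hdg hdf),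
      dbar_mul_conj hdf hdg, dbar_mul_conj hdg hdf]
  have hdbarL : dbar (fun w : ℂ => ((lam w : ℝ) : ℂ)) z =
      (φ₁ z * conj (deriv φ₁ z) + φ₂ z * conj (deriv φ₂ z) + φ₃ z * conj (deriv φ₃ z)) / 2 := by
    rw [show (fun w : ℂ => ((lam w : ℝ) : ℂ)) = fun w =>
      (2 : ℂ)⁻¹ * ((φ₁ w * conj (φ₁ w) + φ₂ w * conj (φ₂ w)) + φ₃ w * conj (φ₃ w)) from
      funext fun w => by rw [hLc w]; ring]
    have h12 : DifferentiableAt ℝ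
        (fun w => φ₁ w * conj (φ₁ w) + φ₂ w * conj (φ₂ w)) z :=
      (hprod2 _ _ hd1 hd1).add (hprod2 _ _ hd2 hd2)
    rw [dbar_const_mul (f := fun w => φ₁ w * conj (φ₁ w) + φ₂ w * conj (φ₂ w) + φ₃ w * conj (φ₃ w)) _ (h12.add (hprod2 _ _ hd3 hd3)),
      dbar_add h12 (hprod2 _ _ hd3 hd3), dbar_add (hprod2 _ _ hd1 hd1) (hprod2 _ _ hd2 hd2),
      dbar_mul_conj hd1 hd1, dbar_mul_conj hd2 hd2, dbar_mul_conj hd3 hd3]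
    ring
  have hc : (Complex.I / 2 * (f z * conj (g z) - g z * conj (f z))) / ((lam z : ℝ) : ℂ) *
      ((lam z : ℝ) : ℂ) = Complex.I / 2 * (f z * conj (g z) - g z * conj (f z)) :=
    div_mul_cancel₀ _ hne
  rw [hdbarN, hdbarL] at hNL
  linear_combination -((lam z : ℝ) : ℂ) * hNL -
    ((φ₁ z * conj (deriv φ₁ z) + φ₂ z * conj (deriv φ₂ z) + φ₃ z * conj (deriv φ₃ z)) / 2) * hc

lemma key1 (a b c A B C p q r l dα dβ dγ βz γz : ℂ) (hl : l ≠ 0)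
    (h2 : l = (a*A + b*B + c*C)/2) (hS : a^2 + b^2 + c^2 = 0)
    (hA : l^2 * dα = l*(Complex.I/2*(b*r - c*q)) - (Complex.I/2*(b*C - c*B))*((a*p + b*q + c*r)/2))
    (hB : l^2 * dβ = l*(Complex.I/2*(c*p - a*r)) - (Complex.I/2*(c*A - a*C))*((a*p + b*q + c*r)/2))
    (hC : l^2 * dγ = l*(Complex.I/2*(a*q - b*p)) - (Complex.I/2*(a*B - b*A))*((a*p + b*q + c*r)/2))
    (hvβ : l * βz = Complex.I/2*(c*A - a*C)) (hvγ : l * γz = Complex.I/2*(a*B - b*A)) :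
    -Complex.I * dα = βz * dγ - γz * dβ := by
  have h3 : l^3 ≠ 0 := pow_ne_zero 3 hl
  apply mul_left_cancel₀ h3
  linear_combination (-Complex.I*l)*hA - (Complex.I/2*(c*A - a*C))*hC - (l^2*dγ)*hvβ
    + (Complex.I/2*(a*B - b*A))*hB + (l^2*dβ)*hvγ
    - (Complex.I^2/2)*l*(b*r - c*q)*h2 - (Complex.I^2/4)*l*(B*r - C*q)*hS

lemma key_all (a b c A B C p q r l dα dβ dγ αz βz γz : ℂ) (hl : l ≠ 0)
    (h2 : l = (a*A + b*B + c*C)/2) (hS : a^2 + b^2 + c^2 = 0)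
    (hA : l^2 * dα = l*(Complex.I/2*(b*r - c*q)) - (Complex.I/2*(b*C - c*B))*((a*p + b*q + c*r)/2))
    (hB : l^2 * dβ = l*(Complex.I/2*(c*p - a*r)) - (Complex.I/2*(c*A - a*C))*((a*p + b*q + c*r)/2))
    (hC : l^2 * dγ = l*(Complex.I/2*(a*q - b*p)) - (Complex.I/2*(a*B - b*A))*((a*p + b*q + c*r)/2))
    (hvα : l * αz = Complex.I/2*(b*C - c*B)) (hvβ : l * βz = Complex.I/2*(c*A - a*C))
    (hvγ : l * γz = Complex.I/2*(a*B - b*A)) :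
    (-Complex.I * dα = βz * dγ - γz * dβ) ∧ (-Complex.I * dβ = γz * dα - αz * dγ) ∧
      (-Complex.I * dγ = αz * dβ - βz * dα) :=
  ⟨key1 a b c A B C p q r l dα dβ dγ βz γz hl h2 hS hA hB hC hvβ hvγ,
    key1 b c a B C A q r p l dβ dγ dα γz αz hl (by linear_combination h2)
      (by linear_combination hS) (by linear_combination hB) (by linear_combination hC)
      (by linear_combination hA) hvγ hvα,
    key1 c a b C A B r p q l dγ dα dβ αz βz hl (by linear_combination h2)
      (by linear_combination hS) (by linear_combination hC) (by linear_combination hA)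
      (by linear_combination hB) hvα hvβ⟩

lemma him (x y : ℂ) (t : ℝ) :
    ((-((x * conj y).im / t) : ℝ) : ℂ)
      = (Complex.I / 2 * (x * conj y - y * conj x)) / ((t : ℝ) : ℂ) := by
  have hy : conj (x * conj y) = y * conj x := by
    rw [map_mul, Complex.conj_conj]; ring
  have hs := Complex.sub_conj (x * conj y)
  push_cast at hs
  have key : ((-(x * conj y).im : ℝ) : ℂ) = Complex.I / 2 * (x * conj y - y * conj x) := by
    rw [← hy]
    push_cast
    linear_combination (-Complex.I/2)*hs + (-(((x * conj y).im : ℝ) : ℂ))*Complex.I_sq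
  have h1 : -((x * conj y).im / t) = (-(x * conj y).im) / t := by ring
  rw [h1, Complex.ofReal_div, key]

theorem gauss_map_dbar_relations
    (U : Set ℂ) (hU : IsOpen U) (φ₁ φ₂ φ₃ : ℂ → ℂ)
    (hφ₁ : DifferentiableOn ℂ φ₁ U) (hφ₂ : DifferentiableOn ℂ φ₂ U)
    (hφ₃ : DifferentiableOn ℂ φ₃ U)
    (hsum : ∀ z ∈ U, φ₁ z ^ 2 + φ₂ z ^ 2 + φ₃ z ^ 2 = 0)
    (lam : ℂ → ℝ)
    (hlam : lam = fun z =>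
      (‖φ₁ z‖ ^ 2 + ‖φ₂ z‖ ^ 2 + ‖φ₃ z‖ ^ 2) / 2)
    (hpos : ∀ z ∈ U, 0 < lam z)
    (α β γ : ℂ → ℂ)
    (hα : α = fun z => (↑(-((φ₂ z * conj (φ₃ z)).im / lam z)) : ℂ))
    (hβ : β = fun z => (↑(-((φ₃ z * conj (φ₁ z)).im / lam z)) : ℂ))
    (hγ : γ = fun z => (↑(-((φ₁ z * conj (φ₂ z)).im / lam z)) : ℂ)) :
    ∀ z ∈ U,
      -Complex.I * dbar α z = β z * dbar γ z - γ z * dbar β z ∧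
      -Complex.I * dbar β z = γ z * dbar α z - α z * dbar γ z ∧
      -Complex.I * dbar γ z = α z * dbar β z - β z * dbar α z := by
  intro z hz
  have hmem : U ∈ nhds z := hU.mem_nhds hz
  have hd1 : DifferentiableAt ℂ φ₁ z := (hφ₁ z hz).differentiableAt hmem
  have hd2 : DifferentiableAt ℂ φ₂ z := (hφ₂ z hz).differentiableAt hmem
  have hd3 : DifferentiableAt ℂ φ₃ z := (hφ₃ z hz).differentiableAt hmem
  have hLc : ∀ w, ((lam w : ℝ) : ℂ) =
      (φ₁ w * conj (φ₁ w) + φ₂ w * conj (φ₂ w) + φ₃ w * conj (φ₃ w)) / 2 := by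
    intro w
    simp only [hlam, Complex.mul_conj, ← Complex.sq_norm]
    push_cast
    ring
  have hne : ((lam z : ℝ) : ℂ) ≠ 0 := Complex.ofReal_ne_zero.mpr (hpos z hz).ne'
  have hαe : α = fun w => (Complex.I / 2 * (φ₂ w * conj (φ₃ w) - φ₃ w * conj (φ₂ w))) /
      ((lam w : ℝ) : ℂ) := by
    rw [hα]; funext w; exact him _ _ _
  have hβe : β = fun w => (Complex.I / 2 * (φ₃ w * conj (φ₁ w) - φ₁ w * conj (φ₃ w))) /
      ((lam w : ℝ) : ℂ) := by
    rw [hβ]; funext w; exact him _ _ _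
  have hγe : γ = fun w => (Complex.I / 2 * (φ₁ w * conj (φ₂ w) - φ₂ w * conj (φ₁ w))) /
      ((lam w : ℝ) : ℂ) := by
    rw [hγ]; funext w; exact him _ _ _
  have hA := dbar_component hd1 hd2 hd3 hd2 hd3 hLc hne
  have hB := dbar_component hd1 hd2 hd3 hd3 hd1 hLc hne
  have hC := dbar_component hd1 hd2 hd3 hd1 hd2 hLc hne
  have hvα : ((lam z : ℝ) : ℂ) *
      ((Complex.I / 2 * (φ₂ z * conj (φ₃ z) - φ₃ z * conj (φ₂ z))) / ((lam z : ℝ) : ℂ))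
      = Complex.I / 2 * (φ₂ z * conj (φ₃ z) - φ₃ z * conj (φ₂ z)) := mul_div_cancel₀ _ hne
  have hvβ : ((lam z : ℝ) : ℂ) *
      ((Complex.I / 2 * (φ₃ z * conj (φ₁ z) - φ₁ z * conj (φ₃ z))) / ((lam z : ℝ) : ℂ))
      = Complex.I / 2 * (φ₃ z * conj (φ₁ z) - φ₁ z * conj (φ₃ z)) := mul_div_cancel₀ _ hne
  have hvγ : ((lam z : ℝ) : ℂ) *
      ((Complex.I / 2 * (φ₁ z * conj (φ₂ z) - φ₂ z * conj (φ₁ z))) / ((lam z : ℝ) : ℂ))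
      = Complex.I / 2 * (φ₁ z * conj (φ₂ z) - φ₂ z * conj (φ₁ z)) := mul_div_cancel₀ _ hne
  simp only [hαe, hβe, hγe]
  exact key_all (φ₁ z) (φ₂ z) (φ₃ z) (conj (φ₁ z)) (conj (φ₂ z)) (conj (φ₃ z))
    (conj (deriv φ₁ z)) (conj (deriv φ₂ z)) (conj (deriv φ₃ z)) ((lam z : ℝ) : ℂ)
    _ _ _ _ _ _ hne (hLc z) (hsum z hz) hA hB hC hvα hvβ hvγ
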